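/- Let ψ₀ be a minimizer of the Gagliardo–Nirenberg inequality and q = p + p²/N, ᾱ = 1/(p a^{p²/N} C^q). For μ < ᾱ, define t_μ by e^{(p^*−p)t_μ} = (1 − μ/ᾱ) ‖∇ψ₀‖_p^p ‖ψ₀‖_p^{p^*−p}·a^{p−p^*}/‖ψ₀‖_{p^*}^{p^*} (appropriately normalized so that t_μ ⋆ (a ψ₀/‖ψ₀‖_p) lies on the Pohozaev manifold). Then the energy satisfies E_μ(t_μ ⋆ φ) = (1/N)(1 − μ/ᾱ)^{N/p} ‖∇ψ₀‖_p^N / ‖ψ₀‖_{p^*}^N, hence m⁻(a,μ) ≤ C(ᾱ − μ)^{N/p}. -/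

import Mathlib

/-- Energy of the test function `t_μ ⋆ φ` (with `φ = aψ₀/‖ψ₀‖_p`, `ψ₀` a Gagliardo–Nirenberg
minimizer) in the critical case `q = p + p²/N`: with `ᾱ = 1/(p a^{p²/N} C^q)`, `μ < ᾱ`,
`G = ‖∇φ‖_p^p`, `Q = ‖φ‖_q^q`, `P = ‖φ‖_{p*}^{p*}` satisfying the GN equality
`μγ_q Q = (μ/ᾱ)G` and `t` determined by `e^{(p*-p)t} = (1-μ/ᾱ)G/P`, the energy equals
`(1/N)(1-μ/ᾱ)^{N/p} G^{N/p}/P^{(N-p)/p}`, hence is bounded by a constant times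
`(ᾱ-μ)^{N/p}`. -/
theorem stmt_17 (N p a μ C G Q P t q γ pstar αbar : ℝ)
    (hp : 1 < p) (hpN : p < N) (ha : 0 < a) (hC : 0 < C)
    (hq : q = p + p ^ 2 / N) (hγ : γ = N * (q - p) / (p * q)) (hps : pstar = N * p / (N - p))
    (hαbar : αbar = 1 / (p * a ^ (p ^ 2 / N) * C ^ q))
    (hμ : 0 < μ) (hμ2 : μ < αbar)
    (hG : 0 < G) (hQ : 0 < Q) (hP : 0 < P)
    (hGN : μ * γ * Q = (μ / αbar) * G)
    (ht : Real.exp ((pstar - p) * t) = (1 - μ / αbar) * G / P) :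
    (1 / p) * Real.exp (p * t) * G - (μ / q) * Real.exp (q * γ * t) * Q -
        (1 / pstar) * Real.exp (pstar * t) * P =
      (1 / N) * (1 - μ / αbar) ^ (N / p) * G ^ (N / p) / P ^ ((N - p) / p) ∧
    (1 / p) * Real.exp (p * t) * G - (μ / q) * Real.exp (q * γ * t) * Q -
        (1 / pstar) * Real.exp (pstar * t) * P ≤
      ((1 / N) * αbar ^ (-(N / p)) * G ^ (N / p) / P ^ ((N - p) / p)) * (αbar - μ) ^ (N / p) := by
  have hp0 : (0:ℝ) < p := lt_trans one_pos hp
  have hN0 : (0:ℝ) < N := lt_trans hp0 hpN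
  have hNp : (0:ℝ) < N - p := sub_pos.mpr hpN
  have hα : 0 < αbar := by rw [hαbar]; positivity
  have hc0 : 0 < 1 - μ / αbar := by
    have : μ / αbar < 1 := (div_lt_one hα).mpr hμ2
    linarith
  set c := 1 - μ / αbar with hc
  have hq0 : (0:ℝ) < q := by
    rw [hq]; positivity
  have hqγ : q * γ = p := by
    rw [hγ, hq]
    field_simp
    ring
  have hγval : γ = p / q := by
    rw [eq_div_iff hq0.ne']
    linarith [hqγ, mul_comm q γ]
  have hps0 : (0:ℝ) < pstar := by rw [hps]; positivity
  have hps_p : pstar - p = p ^ 2 / (N - p) := by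
    rw [hps]; field_simp; ring
  -- exp(q γ t) = exp(p t)
  have hexpq : Real.exp (q * γ * t) = Real.exp (p * t) := by rw [hqγ]
  -- μ/q * Q = (1/p) * (μ/αbar) * G
  have hμQ : μ / q * Q = 1 / p * (μ / αbar) * G := by
    rw [hγval] at hGN
    field_simp at hGN ⊢
    nlinarith [hGN]
  -- exp(pstar t) * P = exp(p t) * c * G
  have hexpP : Real.exp (pstar * t) * P = Real.exp (p * t) * (c * G) := by
    have : pstar * t = p * t + (pstar - p) * t := by ring
    rw [this, Real.exp_add, ht]
    field_simp
  -- exp(p t) = (c*G/P) ^ ((N-p)/p)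
  have hept : Real.exp (p * t) = (c * G / P) ^ ((N - p) / p) := by
    rw [← ht, ← Real.exp_mul]
    congr 1
    rw [hps_p]
    field_simp
  -- energy simplification
  have hNpp : 1 / p - 1 / pstar = 1 / N := by
    rw [hps]; field_simp; ring
  have hE : (1 / p) * Real.exp (p * t) * G - (μ / q) * Real.exp (q * γ * t) * Q -
      (1 / pstar) * Real.exp (pstar * t) * P = (1 / N) * Real.exp (p * t) * (c * G) := by
    have h1 : (μ / q) * Real.exp (q * γ * t) * Q = Real.exp (p * t) * (1 / p * (μ / αbar) * G) := by
      rw [hexpq]; rw [← hμQ]; ring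
    have h2 : (1 / pstar) * Real.exp (pstar * t) * P = (1 / pstar) * (Real.exp (p * t) * (c * G)) := by
      rw [mul_assoc, hexpP]
    rw [h1, h2, ← hNpp, hc]
    ring
  have hrpow : Real.exp (p * t) * (c * G) = c ^ (N / p) * G ^ (N / p) / P ^ ((N - p) / p) := by
    rw [hept, Real.div_rpow (by positivity) hP.le, Real.mul_rpow hc0.le hG.le]
    have hNdiv : N / p = (N - p) / p + 1 := by field_simp; ring
    rw [hNdiv, Real.rpow_add_one hc0.ne', Real.rpow_add_one hG.ne']
    field_simp
  have hEq : (1 / p) * Real.exp (p * t) * G - (μ / q) * Real.exp (q * γ * t) * Q -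
      (1 / pstar) * Real.exp (pstar * t) * P =
      (1 / N) * c ^ (N / p) * G ^ (N / p) / P ^ ((N - p) / p) := by
    rw [hE, mul_assoc, hrpow]; ring
  refine ⟨hEq, ?_⟩
  rw [hEq]
  have hcval : c = (αbar - μ) / αbar := by
    rw [hc]; field_simp
  have : c ^ (N / p) = (αbar - μ) ^ (N / p) * αbar ^ (-(N / p)) := by
    rw [hcval, Real.div_rpow (by linarith) hα.le, Real.rpow_neg hα.le, div_eq_mul_inv]
  rw [this]
  apply le_of_eq
  ring
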